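/- Let β ∈ (0,1), q ∈ (0,1], δ := β·q, and Q_b > 0. For μ_s > 0 define S(μ_s) := 1 + 1/δ + δ·Q_b/μ_s and λ*(μ_s) := (S(μ_s) − √(S(μ_s)² − 4/δ))/2. Then λ*(μ_s) tends to 0 as μ_s tends to 0 from the right. -/

import Mathlib

/-- λ*(μ_s) → 0 as μ_s → 0⁺. -/
theorem debt_persistence_tendsto_zero
    (β q Qb δ : ℝ)
    (hβ0 : 0 < β) (hβ1 : β < 1) (hq0 : 0 < q) (hq1 : q ≤ 1)
    (hδ : δ = β * q) (hQb : 0 < Qb) :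
    Filter.Tendsto
      (fun μs : ℝ =>
        ((1 + 1/δ + δ * Qb / μs) -
          Real.sqrt ((1 + 1/δ + δ * Qb / μs) ^ 2 - 4 / δ)) / 2)
      (nhdsWithin 0 (Set.Ioi 0)) (nhds 0) := by
  have hδ0 : 0 < δ := by rw [hδ]; positivity
  apply squeeze_zero' (g := fun μs : ℝ => 2 / (δ ^ 2 * Qb) * μs)
  · filter_upwards [self_mem_nhdsWithin] with μ hμ
    have hμ0 : 0 < μ := hμ
    set S : ℝ := 1 + 1/δ + δ * Qb / μ with hS
    have hS0 : 0 < S := by positivity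
    have hsq : Real.sqrt (S ^ 2 - 4 / δ) ≤ S := by
      calc Real.sqrt (S ^ 2 - 4 / δ) ≤ Real.sqrt (S ^ 2) := by
            apply Real.sqrt_le_sqrt; nlinarith [div_pos (by positivity : (0:ℝ) < 4) hδ0]
        _ = S := by rw [Real.sqrt_sq hS0.le]
    linarith
  · filter_upwards [self_mem_nhdsWithin] with μ hμ
    have hμ0 : 0 < μ := hμ
    set S : ℝ := 1 + 1/δ + δ * Qb / μ with hS
    have hS0 : 0 < S := by positivity
    have hSge : δ * Qb / μ ≤ S := by
      have h1 : 0 < 1/δ := by positivity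
      nlinarith
    have hc : 4 / δ ≤ S ^ 2 := by
      have h1 : 1 + 1/δ ≤ S := by
        have : 0 < δ * Qb / μ := by positivity
        linarith
      have h2 : (1 - 1/δ)^2 ≥ 0 := sq_nonneg _
      have h3 : (1 + 1/δ)^2 ≥ 4/δ := by
        have : (1 + 1/δ)^2 - 4 * (1/δ) = (1 - 1/δ)^2 := by ring
        have h4 : 4/δ = 4 * (1/δ) := by ring
        nlinarith
      nlinarith [h1, hS0]
    have ht0 : 0 ≤ S ^ 2 - 4 / δ := by linarith
    have hsqle : Real.sqrt (S ^ 2 - 4 / δ) ≤ S := by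
      calc Real.sqrt (S ^ 2 - 4 / δ) ≤ Real.sqrt (S ^ 2) := by
            apply Real.sqrt_le_sqrt; linarith [div_pos (by norm_num : (0:ℝ) < 4) hδ0]
        _ = S := by rw [Real.sqrt_sq hS0.le]
    have hsqsq : Real.sqrt (S ^ 2 - 4 / δ) ^ 2 = S ^ 2 - 4 / δ := Real.sq_sqrt ht0
    have hsqnn : 0 ≤ Real.sqrt (S ^ 2 - 4 / δ) := Real.sqrt_nonneg _
    -- key: S * (S - sqrt) ≤ 4/δ
    have hkey : S * (S - Real.sqrt (S ^ 2 - 4 / δ)) ≤ 4 / δ := by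
      nlinarith [hsqsq, hsqle, hsqnn]
    -- hence (S - sqrt)/2 ≤ (4/δ)/(2S) ≤ (4/δ)·μ/(2 δ Qb) = 2/(δ²Qb)·μ
    have h5 : (S - Real.sqrt (S ^ 2 - 4 / δ)) / 2 ≤ (4 / δ) / (2 * S) := by
      rw [div_le_div_iff₀ (by norm_num) (by positivity)]
      nlinarith
    have h6 : (4 / δ) / (2 * S) ≤ 2 / (δ ^ 2 * Qb) * μ := by
      have hSQ : 0 < δ * Qb / μ := by positivity
      have : (4 / δ) / (2 * S) ≤ (4 / δ) / (2 * (δ * Qb / μ)) := by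
        apply div_le_div_of_nonneg_left (by positivity) (by positivity)
        linarith
      calc (4 / δ) / (2 * S) ≤ (4 / δ) / (2 * (δ * Qb / μ)) := this
        _ = 2 / (δ ^ 2 * Qb) * μ := by
            field_simp
            ring
    linarith
  · have : Filter.Tendsto (fun μs : ℝ => 2 / (δ ^ 2 * Qb) * μs) (nhds 0) (nhds 0) := by
      have h : Filter.Tendsto (fun μs : ℝ => 2 / (δ ^ 2 * Qb) * μs) (nhds 0) (nhds (2 / (δ ^ 2 * Qb) * 0)) :=
        ((continuous_const.mul continuous_id).tendsto (0 : ℝ))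
      simpa using h
    exact this.mono_left nhdsWithin_le_nhds
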